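/- arXiv:2002.01303 — 2 statements merged into one kernel-verified Lean document; each statement's English description precedes it below -/
import Mathlib

section
/- Let $T$ be a positive self-adjoint compact operator on a separable Hilbert space with eigenvalues $t_1 \ge t_2 \ge \cdots \ge 0$ satisfying $t_n \le \mu n^{-1/b}$ for all $n$, where $\mu > 0$ and $0 < b < 1$. Then there exists a constant $c > 0$ (depending on $\mu$ and $b$) such that the effective dimension $\mathcal{N}(\lambda) = \sum_{n=1}^\infty \frac{t_n}{\lambda + t_n}$ satisfies $\mathcal{N}(\lambda) \le c \lambda^{-b}$ for all $\lambda > 0$. -/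
open Real Finset

/-- Bernoulli-type inequality: `(1-y)^q * (1+q*y) ≤ 1` for `0 ≤ y < 1`, `0 < q`. -/
lemma bern_aux {y q : ℝ} (hy0 : 0 ≤ y) (hy1 : y < 1) (hq : 0 < q) :
    (1 - y) ^ q * (1 + q * y) ≤ 1 := by
  have h1y : (0:ℝ) < 1 - y := by linarith
  have h1qy : (0:ℝ) < 1 + q * y := by positivity
  have hlog1 : Real.log (1 - y) ≤ -y := by
    have := Real.log_le_sub_one_of_pos h1y; linarith
  have hlog2 : Real.log (1 + q * y) ≤ q * y := by
    have := Real.log_le_sub_one_of_pos h1qy; linarith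
  have heq : (1 - y) ^ q * (1 + q * y)
      = Real.exp (q * Real.log (1 - y) + Real.log (1 + q * y)) := by
    rw [Real.exp_add, Real.rpow_def_of_pos h1y, Real.exp_log h1qy]; ring_nf
  rw [heq]
  calc Real.exp (q * Real.log (1 - y) + Real.log (1 + q * y))
      ≤ Real.exp 0 := by
        apply Real.exp_le_exp.2
        nlinarith [mul_le_mul_of_nonneg_left hlog1 hq.le]
    _ = 1 := Real.exp_zero

/-- Key step: `(p-1) * (m+1)^(-p) ≤ m^(1-p) - (m+1)^(1-p)` for `1 ≤ m`, `1 < p`. -/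
lemma step_aux {m p : ℝ} (hm : 1 ≤ m) (hp : 1 < p) :
    (p - 1) * (m + 1) ^ (-p) ≤ m ^ (1 - p) - (m + 1) ^ (1 - p) := by
  have hm0 : (0:ℝ) < m := by linarith
  have hm1 : (0:ℝ) < m + 1 := by linarith
  set y : ℝ := 1 / (m + 1) with hy
  have hy0 : 0 ≤ y := by positivity
  have hy1 : y < 1 := by rw [hy, div_lt_one hm1]; linarith
  have hq : 0 < p - 1 := by linarith
  have hb := bern_aux hy0 hy1 hq
  have h1ypos : (0:ℝ) < 1 - y := by linarith
  have hmy : m = (m + 1) * (1 - y) := by rw [hy]; field_simp; ring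
  -- from bern: 1 + (p-1)*y ≤ (1-y)^(1-p)
  have hbern : 1 + (p - 1) * y ≤ (1 - y) ^ (1 - p) := by
    have hc : (0:ℝ) < (1 - y) ^ (p - 1) := Real.rpow_pos_of_pos h1ypos _
    have h1 : 1 + (p - 1) * y ≤ 1 / ((1 - y) ^ (p - 1)) :=
      (le_div_iff₀ hc).2 (by linarith [hb, mul_comm ((1-y)^(p-1)) (1 + (p-1)*y)])
    calc 1 + (p - 1) * y ≤ 1 / ((1 - y) ^ (p - 1)) := h1
      _ = (1 - y) ^ (-(p - 1)) := by rw [Real.rpow_neg h1ypos.le, one_div]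
      _ = (1 - y) ^ (1 - p) := by ring_nf
  have hsplit : m ^ (1 - p) = (m + 1) ^ (1 - p) * (1 - y) ^ (1 - p) := by
    conv_lhs => rw [hmy]
    exact Real.mul_rpow hm1.le h1ypos.le
  have hmul : (m + 1) ^ (1 - p) * y = (m + 1) ^ (-p) := by
    rw [hy, one_div, ← Real.rpow_neg_one (m+1), ← Real.rpow_add hm1]
    congr 1; ring
  have hpos1 : (0:ℝ) < (m + 1) ^ (1 - p) := Real.rpow_pos_of_pos hm1 _
  have h2 : (m + 1) ^ (1 - p) * (1 + (p - 1) * y) ≤ m ^ (1 - p) := by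
    rw [hsplit]
    exact mul_le_mul_of_nonneg_left hbern hpos1.le
  nlinarith [h2, hmul]

/-- Tail bound: for `p > 1` and `N ≥ 1`, `∑' n, ((N+n:ℝ)+1)^(-p) ≤ N^(1-p)/(p-1)`. -/
lemma tail_aux {p : ℝ} (hp : 1 < p) {N : ℕ} (hN : 1 ≤ N) :
    (∑' n : ℕ, (((N:ℝ) + n) + 1) ^ (-p)) ≤ (N:ℝ) ^ (1 - p) / (p - 1) := by
  have hq : (0:ℝ) < p - 1 := by linarith
  apply Real.tsum_le_of_sum_range_le (fun n => Real.rpow_nonneg (by positivity) _)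
  intro k
  have key : ∀ i : ℕ, (((N:ℝ) + i) + 1) ^ (-p)
      ≤ (((N:ℝ) + i) ^ (1 - p) - (((N:ℝ) + i) + 1) ^ (1 - p)) / (p - 1) := by
    intro i
    have hm : (1:ℝ) ≤ (N:ℝ) + i := by
      have : (1:ℝ) ≤ (N:ℝ) := by exact_mod_cast hN
      have : (0:ℝ) ≤ (i:ℝ) := Nat.cast_nonneg i
      linarith
    have := step_aux hm hp
    rw [le_div_iff₀ hq]
    nlinarith [this]
  set F : ℕ → ℝ := fun i => ((N:ℝ) + i) ^ (1 - p) with hF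
  have hFs : ∀ i : ℕ, F (i+1) = (((N:ℝ) + i) + 1) ^ (1 - p) := by
    intro i; simp only [hF]; push_cast; ring_nf
  calc ∑ i ∈ range k, (((N:ℝ) + i) + 1) ^ (-p)
      ≤ ∑ i ∈ range k, (F i - F (i+1)) / (p - 1) := by
        apply Finset.sum_le_sum; intro i _
        rw [hFs i]; exact key i
    _ = (∑ i ∈ range k, (F i - F (i+1))) / (p - 1) := by rw [Finset.sum_div]
    _ = (F 0 - F k) / (p - 1) := by rw [Finset.sum_range_sub' F k]
    _ ≤ (N:ℝ) ^ (1 - p) / (p - 1) := by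
        have h0 : (0:ℝ) ≤ F k := Real.rpow_nonneg (by positivity) _
        have hF0 : F 0 = (N:ℝ) ^ (1 - p) := by simp [hF]
        rw [hF0]
        gcongr
        linarith

set_option maxHeartbeats 1000000 in
/-- Polynomial decay of the eigenvalues `t n ≤ μ (n+1)^{-1/b}` of a positive self-adjoint
compact (trace-class) operator implies the power-type bound `𝒩(λ) ≤ c λ^{-b}` for the
effective dimension `𝒩(λ) = ∑ n, t n / (λ + t n)`. -/
theorem stmt2 (t : ℕ → ℝ) (ht0 : ∀ n, 0 ≤ t n) (hmono : Antitone t)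
    (hsum : Summable t) (μ b : ℝ) (hμ : 0 < μ) (hb0 : 0 < b) (hb1 : b < 1)
    (hdecay : ∀ n : ℕ, t n ≤ μ * ((n : ℝ) + 1) ^ (-(1 / b))) :
    ∃ c : ℝ, 0 < c ∧ ∀ lam : ℝ, 0 < lam →
      (∑' n, t n / (lam + t n)) ≤ c * lam ^ (-b) := by
  set p : ℝ := 1 / b with hp_def
  have hp1 : 1 < p := one_lt_one_div hb0 hb1
  set S : ℝ := ∑' n, t n with hS_def
  have hS0 : 0 ≤ S := tsum_nonneg ht0
  have h1b : (0:ℝ) < 1 - b := by linarith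
  have hμb : 0 < μ ^ b := Real.rpow_pos_of_pos hμ b
  have hKpos : (0:ℝ) < 1 + b / (1 - b) := by positivity
  refine ⟨μ ^ b * (1 + b / (1 - b)) + S + 1, by nlinarith, ?_⟩
  intro lam hlam
  have hden : ∀ n, 0 < lam + t n := fun n => by linarith [ht0 n]
  have hfle : ∀ n, t n / (lam + t n) ≤ t n / lam := by
    intro n
    apply div_le_div_of_nonneg_left (ht0 n) hlam
    linarith [ht0 n]
  have hfnn : ∀ n, 0 ≤ t n / (lam + t n) := fun n => div_nonneg (ht0 n) (hden n).le
  have hfsum : Summable (fun n => t n / (lam + t n)) :=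
    Summable.of_nonneg_of_le hfnn hfle (hsum.div_const lam)
  have hlamb : 0 < lam ^ (-b) := Real.rpow_pos_of_pos hlam _
  rcases le_or_gt 1 lam with hl | hl
  · -- large lambda
    calc (∑' n, t n / (lam + t n)) ≤ ∑' n, t n / lam :=
          Summable.tsum_le_tsum hfle hfsum (hsum.div_const lam)
      _ = S * lam⁻¹ := by rw [tsum_div_const, div_eq_mul_inv]
      _ ≤ S * lam ^ (-b) := by
          apply mul_le_mul_of_nonneg_left ?_ hS0
          rw [← Real.rpow_neg_one lam]
          exact Real.rpow_le_rpow_of_exponent_le hl (by linarith)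
      _ ≤ (μ ^ b * (1 + b / (1 - b)) + S + 1) * lam ^ (-b) := by
          apply mul_le_mul_of_nonneg_right ?_ hlamb.le
          nlinarith
  · -- small lambda
    have hμl : (0:ℝ) < μ / lam := by positivity
    set x : ℝ := (μ / lam) ^ b with hx
    have hx0 : 0 < x := Real.rpow_pos_of_pos hμl b
    set N : ℕ := ⌈x⌉₊ with hNdef
    have hN1 : 1 ≤ N := Nat.one_le_ceil_iff.2 hx0
    have hxN : x ≤ (N:ℝ) := Nat.le_ceil x
    have hNx : (N:ℝ) ≤ x + 1 := (Nat.ceil_lt_add_one hx0.le).le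
    -- head bound
    have hhead : ∑ i ∈ Finset.range N, t i / (lam + t i) ≤ (N:ℝ) := by
      calc ∑ i ∈ Finset.range N, t i / (lam + t i) ≤ ∑ i ∈ Finset.range N, (1:ℝ) :=
            Finset.sum_le_sum fun i _ => (div_le_one (hden i)).2 (by linarith [ht0 i])
        _ = (N:ℝ) := by simp
    -- tail bound
    have hg : Summable (fun i : ℕ => ((N:ℝ) + i + 1) ^ (-p)) := by
      have h1 : Summable (fun n : ℕ => (n:ℝ) ^ (-p)) :=
        Real.summable_nat_rpow.2 (by linarith)
      have h2 := (summable_nat_add_iff (N + 1)).2 h1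
      exact h2.congr fun i => by push_cast; ring_nf
    have htailpt : ∀ i : ℕ, t (i + N) / (lam + t (i + N))
        ≤ (μ / lam) * (((N:ℝ) + i) + 1) ^ (-p) := by
      intro i
      calc t (i + N) / (lam + t (i + N)) ≤ t (i + N) / lam := hfle _
        _ ≤ (μ * (((i + N : ℕ):ℝ) + 1) ^ (-p)) / lam := by
            gcongr
            exact hdecay (i + N)
        _ = (μ / lam) * (((N:ℝ) + i) + 1) ^ (-p) := by
            push_cast; ring_nf
    have htail : (∑' i, t (i + N) / (lam + t (i + N)))
        ≤ (μ / lam) * ((N:ℝ) ^ (1 - p) / (p - 1)) := by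
      calc (∑' i, t (i + N) / (lam + t (i + N)))
          ≤ ∑' i : ℕ, (μ / lam) * (((N:ℝ) + i) + 1) ^ (-p) :=
            Summable.tsum_le_tsum htailpt ((summable_nat_add_iff N).2 hfsum) (hg.mul_left _)
        _ = (μ / lam) * ∑' i : ℕ, (((N:ℝ) + i) + 1) ^ (-p) := tsum_mul_left
        _ ≤ (μ / lam) * ((N:ℝ) ^ (1 - p) / (p - 1)) :=
            mul_le_mul_of_nonneg_left (tail_aux hp1 hN1) hμl.le
    -- combine
    have hsplit := (Summable.sum_add_tsum_nat_add N hfsum).symm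
    have hNp : (N:ℝ) ^ (1 - p) ≤ x ^ (1 - p) :=
      Real.rpow_le_rpow_of_nonpos hx0 hxN (by linarith)
    have hxp : x ^ (1 - p) = (μ / lam) ^ (b - 1) := by
      rw [hx, ← Real.rpow_mul hμl.le]
      congr 1
      rw [hp_def, mul_one_sub, mul_one_div, div_self hb0.ne']
    have hmul2 : (μ / lam) * (μ / lam) ^ (b - 1) = x := by
      rw [hx]
      rw [show (μ/lam) * (μ/lam)^(b-1) = (μ/lam)^(1:ℝ) * (μ/lam)^(b-1) by rw [Real.rpow_one]]
      rw [← Real.rpow_add hμl]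
      congr 1; ring
    have hpb : 1 / (p - 1) = b / (1 - b) := by
      rw [hp_def]; field_simp
    have htail2 : (∑' i, t (i + N) / (lam + t (i + N))) ≤ x * (b / (1 - b)) := by
      have h1 : (μ / lam) * ((N:ℝ) ^ (1 - p) / (p - 1)) ≤ (μ / lam) * (x ^ (1 - p) / (p - 1)) := by
        apply mul_le_mul_of_nonneg_left ?_ hμl.le
        gcongr
      have h2 : (μ / lam) * (x ^ (1 - p) / (p - 1)) = x * (b / (1 - b)) := by
        rw [hxp, ← hpb, mul_one_div, mul_div_assoc', hmul2]
      linarith [htail, h1, h2]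
    have hxval : x = μ ^ b * lam ^ (-b) := by
      rw [hx, Real.div_rpow hμ.le hlam.le, Real.rpow_neg hlam.le, div_eq_mul_inv]
    have h1lam : 1 ≤ lam ^ (-b) := by
      rw [← Real.rpow_zero lam]
      exact Real.rpow_le_rpow_of_exponent_ge hlam hl.le (by linarith)
    calc (∑' n, t n / (lam + t n))
        = (∑ i ∈ Finset.range N, t i / (lam + t i)) + ∑' i, t (i + N) / (lam + t (i + N)) :=
          hsplit
      _ ≤ (N:ℝ) + x * (b / (1 - b)) := add_le_add hhead htail2
      _ ≤ x * (1 + b / (1 - b)) + 1 := by nlinarith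
      _ ≤ (μ ^ b * (1 + b / (1 - b)) + S + 1) * lam ^ (-b) := by
          rw [hxval]
          nlinarith [mul_nonneg hS0 hlamb.le]
end

section
/- Let $T_\nu$ and $T_{\mathbf{x}}$ be positive self-adjoint bounded operators on a Hilbert space $H$, $\lambda > 0$, and set $\Psi = \|(T_\nu + \lambda I)^{-1/2}(T_\nu - T_{\mathbf{x}})\|$. Then for $0 \le s \le 1$, $\|(T_{\mathbf{x}} + \lambda I)^{-s}(T_\nu + \lambda I)^{s}\| \le \left( \frac{\Psi}{\sqrt{\lambda}} + 1 \right)^{2s}$. -/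
lemma dyadic_midpoint_Icc {T : Set ℝ} (hT : IsClosed T) (h0 : (0:ℝ) ∈ T) (h1 : (1:ℝ) ∈ T)
    (hmid : ∀ s ∈ T, ∀ t ∈ T, (s + t) / 2 ∈ T) : Set.Icc (0:ℝ) 1 ⊆ T := by
  have key : ∀ n : ℕ, ∀ k : ℕ, k ≤ 2 ^ n → ((k : ℝ) / 2 ^ n) ∈ T := by
    intro n
    induction n with
    | zero =>
      intro k hk
      interval_cases k
      · simpa using h0
      · simpa using h1
    | succ n ih =>
      intro k hk
      rw [pow_succ] at hk
      rcases Nat.even_or_odd k with ⟨j, hj⟩ | ⟨j, hj⟩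
      · have heq : ((k : ℝ) / 2 ^ (n + 1)) = (j : ℝ) / 2 ^ n := by
          subst hj; push_cast; ring
        rw [heq]
        exact ih j (by omega)
      · have hjk : j + 1 ≤ 2 ^ n := by omega
        have heq : ((k : ℝ) / 2 ^ (n + 1)) = ((j : ℝ) / 2 ^ n + ((j + 1 : ℕ) : ℝ) / 2 ^ n) / 2 := by
          subst hj; push_cast; ring
        rw [heq]
        exact hmid _ (ih j (by omega)) _ (ih (j + 1) hjk)
  intro x hx
  rw [← hT.closure_eq]
  set u : ℕ → ℝ := fun n => (⌊x * 2 ^ n⌋₊ : ℝ) / 2 ^ n with hu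
  have h2n : ∀ n : ℕ, (0:ℝ) < 2 ^ n := fun n => by positivity
  have humem : ∀ n, u n ∈ T := by
    intro n
    apply key n
    have : x * 2 ^ n ≤ ((2 ^ n : ℕ) : ℝ) := by
      push_cast
      nlinarith [hx.2, h2n n]
    calc ⌊x * 2 ^ n⌋₊ ≤ ⌊((2 ^ n : ℕ) : ℝ)⌋₊ := Nat.floor_le_floor this
      _ = 2 ^ n := Nat.floor_natCast _
  have hup : ∀ n, u n ≤ x := by
    intro n
    have := Nat.floor_le (mul_nonneg hx.1 (h2n n).le)
    rw [hu, div_le_iff₀ (h2n n)]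
    simpa using this
  have hlow : ∀ n, x - (1/2) ^ n ≤ u n := by
    intro n
    have hfl := Nat.lt_floor_add_one (x * 2 ^ n)
    rw [hu, le_div_iff₀ (h2n n)]
    have : (1/2:ℝ) ^ n * 2 ^ n = 1 := by rw [← mul_pow]; norm_num
    nlinarith [h2n n]
  have htend : Filter.Tendsto u Filter.atTop (nhds x) := by
    have hl : Filter.Tendsto (fun n : ℕ => x - (1/2:ℝ) ^ n) Filter.atTop (nhds x) := by
      have : Filter.Tendsto (fun n : ℕ => (1/2:ℝ) ^ n) Filter.atTop (nhds 0) :=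
        tendsto_pow_atTop_nhds_zero_of_lt_one (by norm_num) (by norm_num)
      simpa using Filter.Tendsto.const_sub x this
    exact tendsto_of_tendsto_of_tendsto_of_le_of_le hl tendsto_const_nhds hlow hup
  exact mem_closure_of_tendsto htend (Filter.Eventually.of_forall humem)

lemma norm_le_of_pow_bound {R : Type*} [NormedRing R] [StarRing R] [CStarRing R]
    (S U V P Q : R) (hS : IsSelfAdjoint S) (hSUV : S = U * V) (hVU : V * U = P * Q)
    (q : ℝ) (hq : 0 < q) (hPQ : ‖P‖ * ‖Q‖ ≤ q) : ‖S‖ ≤ q := by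
  have hpow : ∀ n : ℕ, S ^ (n + 1) = U * (P * Q) ^ n * V := by
    intro n
    induction n with
    | zero => simpa using hSUV
    | succ n ih =>
      rw [pow_succ, ih, hSUV, pow_succ, ← hVU]
      simp [mul_assoc]
  have hnorm : ∀ n : ℕ, ‖S ^ (n + 1)‖ ≤ ‖U‖ * ‖V‖ * q ^ n := by
    intro n
    rw [hpow n]
    rcases Nat.eq_zero_or_pos n with rfl | hn
    · simpa using norm_mul_le U V
    · calc ‖U * (P * Q) ^ n * V‖ ≤ ‖U‖ * ‖(P * Q) ^ n‖ * ‖V‖ :=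
            le_trans (norm_mul_le _ _) (by gcongr; exact norm_mul_le _ _)
        _ ≤ ‖U‖ * q ^ n * ‖V‖ := by
            gcongr
            calc ‖(P * Q) ^ n‖ ≤ ‖P * Q‖ ^ n := norm_pow_le' _ hn
              _ ≤ (‖P‖ * ‖Q‖) ^ n := pow_le_pow_left₀ (norm_nonneg _) (norm_mul_le _ _) n
              _ ≤ q ^ n := pow_le_pow_left₀ (by positivity) hPQ n
        _ = ‖U‖ * ‖V‖ * q ^ n := by ring
  have hSk : ∀ k : ℕ, ‖S‖ ^ (2 ^ k) = ‖S ^ (2 ^ k)‖ := by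
    intro k
    have := congrArg (fun x : NNReal => (x : ℝ)) (hS.nnnorm_pow_two_pow k)
    push_cast at this
    simpa using this.symm
  by_contra hcon
  push_neg at hcon
  have hr1 : 1 < ‖S‖ / q := (one_lt_div hq).mpr hcon
  obtain ⟨n, hn⟩ := pow_unbounded_of_one_lt (‖U‖ * ‖V‖ / q) hr1
  have hmono : (‖S‖ / q) ^ n ≤ (‖S‖ / q) ^ (2 ^ n) :=
    pow_le_pow_right₀ hr1.le (Nat.lt_two_pow_self (n := n)).le
  have hkey : (‖S‖ / q) ^ (2 ^ n) ≤ ‖U‖ * ‖V‖ / q := by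
    obtain ⟨m, hm⟩ : ∃ m, 2 ^ n = m + 1 := ⟨2 ^ n - 1, by have := Nat.one_le_two_pow (n := n); omega⟩
    rw [hm, div_pow, div_le_div_iff₀ (by positivity) hq]
    calc ‖S‖ ^ (m + 1) * q = ‖S ^ (m + 1)‖ * q := by rw [← hm, hSk, hm]
      _ ≤ (‖U‖ * ‖V‖ * q ^ m) * q := mul_le_mul_of_nonneg_right (hnorm m) hq.le
      _ = ‖U‖ * ‖V‖ * q ^ (m + 1) := by rw [pow_succ]; ring
  exact absurd (lt_of_lt_of_le hn (le_trans hmono hkey)) (lt_irrefl _)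

set_option maxHeartbeats 1000000 in
/-- Perturbation bound for powers of shifted operators. Here `A` and `B` are the one-parameter
groups of powers `s ↦ (T_x + λ I)^s` and `s ↦ (T_ν + λ I)^s` (characterized by the group law,
positivity, continuity, and their values at `0` and `1`), and
`Ψ = ‖(T_ν + λ I)^{-1/2} (T_ν - T_x)‖`. Then for `0 ≤ s ≤ 1`,
`‖(T_x + λ I)^{-s} (T_ν + λ I)^s‖ ≤ (Ψ/√λ + 1)^{2s}`. -/
theorem stmt12 {H : Type*} [NormedAddCommGroup H] [InnerProductSpace ℝ H] [CompleteSpace H]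
    (Tν Tx : H →L[ℝ] H) (hTν : Tν.IsPositive) (hTx : Tx.IsPositive)
    (lam : ℝ) (hlam : 0 < lam)
    (A B : ℝ → (H →L[ℝ] H))
    (hA1 : A 1 = Tx + lam • 1) (hB1 : B 1 = Tν + lam • 1)
    (hA0 : A 0 = 1) (hB0 : B 0 = 1)
    (hAgrp : ∀ s s' : ℝ, A (s + s') = A s ∘L A s')
    (hBgrp : ∀ s s' : ℝ, B (s + s') = B s ∘L B s')
    (hApos : ∀ s, (A s).IsPositive) (hBpos : ∀ s, (B s).IsPositive)
    (hAcont : Continuous A) (hBcont : Continuous B)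
    (Ψ : ℝ) (hΨ : Ψ = ‖B (-(1 / 2)) ∘L (Tν - Tx)‖) :
    ∀ s : ℝ, 0 ≤ s → s ≤ 1 →
      ‖A (-s) ∘L B s‖ ≤ (Ψ / Real.sqrt lam + 1) ^ (2 * s) := by
  have hΨ0 : 0 ≤ Ψ := hΨ ▸ norm_nonneg _
  have hsqlam : 0 < Real.sqrt lam := Real.sqrt_pos.mpr hlam
  set c : ℝ := Ψ / Real.sqrt lam with hc
  have hc0 : 0 ≤ c := div_nonneg hΨ0 hsqlam.le
  intro s hs0 hs1
  rcases subsingleton_or_nontrivial H with hH | hH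
  · have hz : A (-s) ∘L B s = 0 := Subsingleton.elim _ _
    rw [hz, norm_zero]
    exact Real.rpow_nonneg (by linarith) _
  -- nontrivial case
  have hA : ∀ u v : ℝ, A (u + v) = A u * A v := fun u v => by
    rw [ContinuousLinearMap.mul_def]; exact hAgrp u v
  have hB : ∀ u v : ℝ, B (u + v) = B u * B v := fun u v => by
    rw [ContinuousLinearMap.mul_def]; exact hBgrp u v
  have hAstar : ∀ u, star (A u) = A u := fun u => (hApos u).isSelfAdjoint
  have hBstar : ∀ u, star (B u) = B u := fun u => (hBpos u).isSelfAdjoint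
  have hAinv : ∀ u, A u * A (-u) = 1 := by
    intro u
    rw [← hA]
    simp [hA0]
  have hBinv : ∀ u, B u * B (-u) = 1 := by
    intro u
    rw [← hB]
    simp [hB0]
  obtain ⟨f, hf⟩ : ∃ g : ℝ → ℝ, g = fun u => ‖A (-u) * B u‖ := ⟨_, rfl⟩
  have hone : ‖(1 : H →L[ℝ] H)‖ = 1 := by
    rw [ContinuousLinearMap.one_def, ContinuousLinearMap.norm_id]
  have hf0 : f 0 = 1 := by simp [hf, neg_zero, hA0, hB0, hone]
  have hfpos : ∀ u, 0 < f u := by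
    intro u
    simp only [hf]
    rw [norm_pos_iff]
    intro hzero
    have hBu : B u = 0 := by
      have : A u * (A (-u) * B u) = B u := by
        rw [← mul_assoc, hAinv, one_mul]
      rw [hzero, mul_zero] at this
      exact this.symm
    have h10 : (1 : H →L[ℝ] H) = 0 := by
      rw [← hBinv u, hBu, zero_mul]
    have := congrArg norm h10
    rw [hone, norm_zero] at this
    norm_num at this
  -- midpoint log-convexity
  have hmid : ∀ u v : ℝ, f ((u + v) / 2) ^ 2 ≤ f u * f v := by
    intro u v
    set m := (u + v) / 2 with hm
    set X := A (-m) * B m with hX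
    have hstarX : star X = B m * A (-m) := by rw [hX, star_mul, hAstar, hBstar]
    have h1 : A (-m) * A (-m) = A (-v) * A (-u) := by
      rw [← hA, ← hA]; congr 1; rw [hm]; ring
    have h2 : B m * B m = B u * B v := by
      rw [← hB, ← hB]; congr 1; rw [hm]; ring
    have hSUV : star X * X = (B m * A (-v)) * (A (-u) * B m) := by
      rw [hstarX, hX]
      calc B m * A (-m) * (A (-m) * B m) = B m * ((A (-m) * A (-m)) * B m) := by
            simp [mul_assoc]
        _ = B m * ((A (-v) * A (-u)) * B m) := by rw [h1]
        _ = (B m * A (-v)) * (A (-u) * B m) := by simp [mul_assoc]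
    have hVU : (A (-u) * B m) * (B m * A (-v)) = (A (-u) * B u) * (B v * A (-v)) := by
      calc (A (-u) * B m) * (B m * A (-v)) = A (-u) * ((B m * B m) * A (-v)) := by
            simp [mul_assoc]
        _ = A (-u) * ((B u * B v) * A (-v)) := by rw [h2]
        _ = (A (-u) * B u) * (B v * A (-v)) := by simp [mul_assoc]
    have hQ : ‖B v * A (-v)‖ = ‖A (-v) * B v‖ := by
      have : B v * A (-v) = star (A (-v) * B v) := by rw [star_mul, hAstar, hBstar]
      rw [this]; exact norm_star (A (-v) * B v)
    have hS : IsSelfAdjoint (star X * X) := IsSelfAdjoint.star_mul_self X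
    have hbound : ‖star X * X‖ ≤ f u * f v :=
      norm_le_of_pow_bound (star X * X) (B m * A (-v)) (A (-u) * B m)
        (A (-u) * B u) (B v * A (-v)) hS hSUV hVU (f u * f v)
        (mul_pos (hfpos u) (hfpos v)) (by simp only [hf]; rw [hQ])
    have hfm : f m = ‖X‖ := by simp only [hf, hX]
    calc f m ^ 2 = ‖star X * X‖ := by
          rw [hfm, sq]; exact CStarRing.norm_star_mul_self.symm
      _ ≤ f u * f v := hbound
  -- norm bound on A (-1)
  have hlb : ∀ x : H, lam * ‖x‖ ≤ ‖A 1 x‖ := by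
    intro x
    have hpos : (0:ℝ) ≤ @inner ℝ _ _ (Tx x) x := by
      have := hTx.inner_nonneg_left x; simpa using this
    have hinner : lam * ‖x‖ ^ 2 ≤ @inner ℝ _ _ (A 1 x) x := by
      rw [hA1]
      simp only [ContinuousLinearMap.add_apply, ContinuousLinearMap.smul_apply,
        ContinuousLinearMap.one_apply]
      rw [inner_add_left, real_inner_smul_left, real_inner_self_eq_norm_sq]
      nlinarith [hpos]
    have hcs : @inner ℝ _ _ (A 1 x) x ≤ ‖A 1 x‖ * ‖x‖ := real_inner_le_norm _ _
    rcases eq_or_ne x 0 with rfl | hx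
    · simp
    · have hxpos : 0 < ‖x‖ := norm_pos_iff.mpr hx
      have : lam * ‖x‖ * ‖x‖ ≤ ‖A 1 x‖ * ‖x‖ := by nlinarith
      exact le_of_mul_le_mul_right this hxpos
  have hAneg1 : ‖A (-1)‖ ≤ 1 / lam := by
    apply ContinuousLinearMap.opNorm_le_bound _ (by positivity)
    intro y
    have happ : A 1 (A (-1) y) = y := by
      have := DFunLike.congr_fun (hAinv 1) y
      simpa [ContinuousLinearMap.mul_apply] using this
    have := hlb (A (-1) y)
    rw [happ] at this
    rw [div_mul_eq_mul_div, le_div_iff₀ hlam]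
    nlinarith [this]
  have hAhalf : ‖A (-(1/2))‖ ≤ 1 / Real.sqrt lam := by
    have hsq : ‖A (-(1/2))‖ ^ 2 ≤ 1 / lam := by
      have heq : A (-(1/2)) * A (-(1/2)) = A (-1) := by
        rw [← hA]; norm_num
      calc ‖A (-(1/2))‖ ^ 2 = ‖star (A (-(1/2))) * A (-(1/2))‖ := by
            rw [sq]; exact CStarRing.norm_star_mul_self.symm
        _ = ‖A (-1)‖ := by rw [hAstar, heq]
        _ ≤ 1 / lam := hAneg1
    calc ‖A (-(1/2))‖ = Real.sqrt (‖A (-(1/2))‖ ^ 2) := (Real.sqrt_sq (norm_nonneg _)).symm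
      _ ≤ Real.sqrt (1 / lam) := Real.sqrt_le_sqrt hsq
      _ = 1 / Real.sqrt lam := by rw [one_div, one_div, Real.sqrt_inv]
  -- f(1/2) ≤ sqrt (f 1)
  have hfhalf : f (1/2) ≤ Real.sqrt (f 1) := by
    have := hmid 0 1
    rw [hf0, one_mul] at this
    norm_num at this
    calc f (1/2) = Real.sqrt (f (1/2) ^ 2) := (Real.sqrt_sq (hfpos _).le).symm
      _ ≤ Real.sqrt (f 1) := Real.sqrt_le_sqrt this
  -- f 1 ≤ 1 + c * sqrt (f 1)
  have hN : f 1 ≤ 1 + c * Real.sqrt (f 1) := by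
    have hdecomp : A (-1) * B 1 = 1 + (A (-1) * B (1/2)) * (B (-(1/2)) * (Tν - Tx)) := by
      have hB1' : B 1 = A 1 + (Tν - Tx) := by rw [hA1, hB1]; abel
      have hid : B (1/2) * B (-(1/2)) = 1 := hBinv (1/2)
      calc A (-1) * B 1 = A (-1) * A 1 + A (-1) * (Tν - Tx) := by
            rw [hB1', mul_add]
        _ = 1 + A (-1) * ((B (1/2) * B (-(1/2))) * (Tν - Tx)) := by
            rw [hid, one_mul]
            congr 1
            have := hAinv (-1)
            rw [neg_neg] at this
            exact this
        _ = 1 + (A (-1) * B (1/2)) * (B (-(1/2)) * (Tν - Tx)) := by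
            simp [mul_assoc]
    have hsplit : ‖A (-1) * B (1/2)‖ ≤ (1 / Real.sqrt lam) * f (1/2) := by
      have heq : A (-1) * B (1/2) = A (-(1/2)) * (A (-(1/2)) * B (1/2)) := by
        rw [← mul_assoc, ← hA]; norm_num
      rw [heq]
      calc ‖A (-(1/2)) * (A (-(1/2)) * B (1/2))‖ ≤ ‖A (-(1/2))‖ * ‖A (-(1/2)) * B (1/2)‖ :=
            norm_mul_le _ _
        _ ≤ (1 / Real.sqrt lam) * f (1/2) := by
            simp only [hf]
            exact mul_le_mul hAhalf (le_refl _) (norm_nonneg _) (by positivity)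
    have hΨ' : ‖B (-(1/2)) * (Tν - Tx)‖ = Ψ := hΨ.symm
    calc f 1 = ‖A (-1) * B 1‖ := by simp only [hf]
      _ ≤ ‖(1 : H →L[ℝ] H)‖ + ‖(A (-1) * B (1/2)) * (B (-(1/2)) * (Tν - Tx))‖ := by
          rw [hdecomp]; exact norm_add_le _ _
      _ ≤ 1 + ‖A (-1) * B (1/2)‖ * ‖B (-(1/2)) * (Tν - Tx)‖ := by
          rw [hone]; gcongr; exact norm_mul_le _ _
      _ ≤ 1 + ((1 / Real.sqrt lam) * f (1/2)) * Ψ := by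
          rw [hΨ']; gcongr
      _ ≤ 1 + ((1 / Real.sqrt lam) * Real.sqrt (f 1)) * Ψ := by
          gcongr
      _ = 1 + c * Real.sqrt (f 1) := by rw [hc]; ring
  -- f 1 ≤ (c+1)^2
  have hN2 : f 1 ≤ (c + 1) ^ 2 := by
    set x := Real.sqrt (f 1) with hx
    have hx0 : 0 ≤ x := Real.sqrt_nonneg _
    have hxsq : x ^ 2 = f 1 := Real.sq_sqrt (hfpos 1).le
    rw [← hxsq] at hN ⊢
    nlinarith [sq_nonneg (x - c - 1), sq_nonneg (x + c + 1), mul_nonneg hc0 hx0]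
  -- conclude via dyadic midpoint argument
  set M : ℝ := (c + 1) ^ 2 with hM
  have hM0 : 0 < M := by positivity
  have hfc : Continuous f := by
    rw [hf]
    exact ((hAcont.comp continuous_neg).mul hBcont).norm
  have hMc : Continuous fun u : ℝ => M ^ u := by
    have heq : (fun u : ℝ => M ^ u) = fun u => Real.exp (Real.log M * u) :=
      funext fun u => Real.rpow_def_of_pos hM0 u
    rw [heq]
    exact Real.continuous_exp.comp (continuous_const.mul continuous_id)
  have hT : Set.Icc (0:ℝ) 1 ⊆ Set.Icc (0:ℝ) 1 ∩ {u : ℝ | f u ≤ M ^ u} := by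
    apply dyadic_midpoint_Icc
    · exact isClosed_Icc.inter (isClosed_le hfc hMc)
    · constructor
      · exact Set.left_mem_Icc.mpr zero_le_one
      · show f 0 ≤ M ^ (0:ℝ)
        rw [Real.rpow_zero, hf0]
    · constructor
      · exact Set.right_mem_Icc.mpr zero_le_one
      · show f 1 ≤ M ^ (1:ℝ)
        rw [Real.rpow_one]; exact hN2
    · rintro u ⟨hu1, hu2⟩ v ⟨hv1, hv2⟩
      have hu2' : f u ≤ M ^ u := hu2
      have hv2' : f v ≤ M ^ v := hv2
      constructor
      · exact ⟨by linarith [hu1.1, hv1.1], by linarith [hu1.2, hv1.2]⟩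
      · show f ((u + v) / 2) ≤ M ^ ((u + v) / 2)
        have hsq : f ((u + v) / 2) ^ 2 ≤ (M ^ ((u + v) / 2)) ^ 2 := by
          calc f ((u + v) / 2) ^ 2 ≤ f u * f v := hmid u v
            _ ≤ M ^ u * M ^ v := mul_le_mul hu2' hv2' (hfpos v).le (Real.rpow_nonneg hM0.le u)
            _ = (M ^ ((u + v) / 2)) ^ 2 := by
                rw [← Real.rpow_natCast (M ^ ((u + v) / 2)) 2, ← Real.rpow_mul hM0.le,
                  ← Real.rpow_add hM0]
                congr 1
                push_cast
                ring
        calc f ((u + v) / 2) = Real.sqrt (f ((u + v) / 2) ^ 2) :=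
              (Real.sqrt_sq (hfpos _).le).symm
          _ ≤ Real.sqrt ((M ^ ((u + v) / 2)) ^ 2) := Real.sqrt_le_sqrt hsq
          _ = M ^ ((u + v) / 2) := Real.sqrt_sq (Real.rpow_nonneg hM0.le _)
  have hfs : f s ≤ M ^ s := (hT ⟨hs0, hs1⟩).2
  have hfinal : M ^ s = (c + 1) ^ (2 * s) := by
    rw [hM]
    rw [show ((c + 1) ^ 2 : ℝ) = (c + 1) ^ (2:ℝ) by
      rw [← Real.rpow_natCast (c+1) 2]; norm_num]
    rw [← Real.rpow_mul (by linarith)]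
  calc ‖A (-s) ∘L B s‖ = f s := by
        simp only [hf]
        rw [ContinuousLinearMap.mul_def]
    _ ≤ M ^ s := hfs
    _ = (c + 1) ^ (2 * s) := hfinal
end
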